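/- Let 0 < β < 1 and x, y real, and set ω = β² + sinh²(x+iy) ∈ ℂ. Then |ω| ≥ |β² − sin²(y)| + sinh²(x). -/

import Mathlib

/-- For `0 < β < 1` and real `x, y`, with `ω = β² + sinh²(x+iy)`,
`|ω| ≥ |β² - sin² y| + sinh² x`. -/
theorem abs_omega_ge (β x y : ℝ) (hβ₀ : 0 < β) (hβ₁ : β < 1) :
    |β ^ 2 - Real.sin y ^ 2| + Real.sinh x ^ 2
      ≤ ‖(β : ℂ) ^ 2 + Complex.sinh (x + y * Complex.I) ^ 2‖ := by
  set s := Real.sinh x with hs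
  set c := Real.cosh x with hc
  set sy := Real.sin y with hsy
  set cy := Real.cos y with hcy
  have hsinh : Complex.sinh (x + y * Complex.I) = (s : ℂ) * cy + (c : ℂ) * sy * Complex.I := by
    rw [Complex.sinh_add, Complex.sinh_mul_I, Complex.cosh_mul_I]
    simp only [hs, hc, hsy, hcy, Complex.ofReal_sinh, Complex.ofReal_cosh, Complex.ofReal_sin,
      Complex.ofReal_cos]
    ring
  have hc2 : c ^ 2 = 1 + s ^ 2 := by
    rw [hc, hs]; nlinarith [Real.cosh_sq x]
  have hcy2 : cy ^ 2 = 1 - sy ^ 2 := by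
    rw [hcy, hsy]; nlinarith [Real.sin_sq_add_cos_sq y]
  rw [hsinh]
  have hre : ((β : ℂ) ^ 2 + ((s : ℂ) * cy + (c : ℂ) * sy * Complex.I) ^ 2).re
      = β ^ 2 + s ^ 2 * cy ^ 2 - c ^ 2 * sy ^ 2 := by
    simp [pow_two]
    ring
  have him : ((β : ℂ) ^ 2 + ((s : ℂ) * cy + (c : ℂ) * sy * Complex.I) ^ 2).im
      = 2 * s * cy * c * sy := by
    simp [pow_two]
    ring
  rw [Complex.norm_def, Complex.normSq_apply, hre, him]
  have hA : 0 ≤ |β ^ 2 - sy ^ 2| + s ^ 2 := by positivity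
  rw [show |β ^ 2 - sy ^ 2| + s ^ 2 = Real.sqrt ((|β ^ 2 - sy ^ 2| + s ^ 2) ^ 2) from
    (Real.sqrt_sq hA).symm]
  apply Real.sqrt_le_sqrt
  have hsy1 : sy ^ 2 ≤ 1 := by nlinarith [sq_nonneg cy]
  rcases abs_cases (β ^ 2 - sy ^ 2) with ⟨h1, h2⟩ | ⟨h1, h2⟩ <;> rw [h1] <;>
    rw [show (2 * s * cy * c * sy) * (2 * s * cy * c * sy) = 4 * (s^2 * cy^2) * (c^2 * sy^2) by
      ring, hc2, hcy2] <;>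
    nlinarith [mul_nonneg (mul_nonneg (by nlinarith : (0:ℝ) ≤ 1 - β ^ 2) (sq_nonneg s))
        (sq_nonneg sy),
      mul_nonneg (mul_nonneg (sq_nonneg β) (sq_nonneg s)) (by linarith : (0:ℝ) ≤ 1 - sy ^ 2)]
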